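/- If a rational function R(z) = N(z)/D(z) with real coefficients satisfies: D has no zeros in the closed left half-plane, deg N < deg D, and |D(iy)|² − |N(iy)|² ≥ 0 for all real y, then R is L-acceptable, i.e. |R(z)| ≤ 1 for all z with Re(z) ≤ 0 and R(z) → 0 as Re(z) → −∞. -/

import Mathlib

open Polynomial Filter

open scoped Topology

lemma aux_eval_div_pow_tendsto (P : Polynomial ℂ) (n : ℕ) (hn : P.natDegree < n + 1) :
    Tendsto (fun z : ℂ => P.eval z / z ^ n) (Bornology.cobounded ℂ) (𝓝 (P.coeff n)) := by
  have hcont : Tendsto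
      (fun w : ℂ => ∑ i ∈ Finset.range (n + 1), P.coeff i * w ^ (n - i)) (𝓝 0)
      (𝓝 (P.coeff n)) := by
    have hc : Continuous fun w : ℂ => ∑ i ∈ Finset.range (n + 1), P.coeff i * w ^ (n - i) := by
      continuity
    have h0 : (∑ i ∈ Finset.range (n + 1), P.coeff i * (0 : ℂ) ^ (n - i)) = P.coeff n := by
      rw [Finset.sum_eq_single n]
      · simp
      · intro i hi hne
        rw [Finset.mem_range] at hi
        have : n - i ≠ 0 := Nat.sub_ne_zero_of_lt (lt_of_le_of_ne (Nat.lt_succ_iff.mp hi) hne)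
        simp [zero_pow this]
      · intro h; exact absurd (Finset.self_mem_range_succ n) h
    simpa [h0] using hc.tendsto 0
  have h0 : Tendsto (fun z : ℂ => z⁻¹) (Bornology.cobounded ℂ) (𝓝 0) := tendsto_inv₀_cobounded
  have hT := hcont.comp h0
  refine hT.congr' ?_
  filter_upwards [Bornology.eventually_ne_cobounded (0 : ℂ)] with z hz
  simp only [Function.comp]
  rw [eval_eq_sum_range' hn, Finset.sum_div]
  refine Finset.sum_congr rfl fun i hi => ?_
  rw [Finset.mem_range] at hi
  rw [inv_pow, pow_sub₀ z hz (Nat.lt_succ_iff.mp hi), mul_inv, inv_inv]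
  field_simp

lemma aux_div_tendsto_zero_cobounded {P Q : Polynomial ℂ} (hQ : Q ≠ 0)
    (h : P.degree < Q.degree) :
    Tendsto (fun z : ℂ => P.eval z / Q.eval z) (Bornology.cobounded ℂ) (𝓝 0) := by
  set n := Q.natDegree with hn
  have hPdeg : P.natDegree < n + 1 :=
    Nat.lt_succ_of_le (natDegree_le_natDegree h.le)
  have hPn : P.coeff n = 0 :=
    coeff_eq_zero_of_degree_lt (h.trans_le (degree_le_natDegree))
  have h1 := aux_eval_div_pow_tendsto P n hPdeg
  rw [hPn] at h1
  have h2 := aux_eval_div_pow_tendsto Q n (Nat.lt_succ_self n)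
  have hlc : Q.coeff n = Q.leadingCoeff := rfl
  have hlc0 : Q.leadingCoeff ≠ 0 := leadingCoeff_ne_zero.mpr hQ
  rw [hlc] at h2
  have h3 : Tendsto (fun z : ℂ => P.eval z / z ^ n * (Q.eval z / z ^ n)⁻¹)
      (Bornology.cobounded ℂ) (𝓝 (0 * Q.leadingCoeff⁻¹)) :=
    h1.mul (h2.inv₀ hlc0)
  rw [zero_mul] at h3
  refine h3.congr' ?_ |>.mono_left le_rfl
  have hQne : ∀ᶠ z : ℂ in Bornology.cobounded ℂ, Q.eval z / z ^ n ≠ 0 :=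
    h2.eventually_ne hlc0
  filter_upwards [Bornology.eventually_ne_cobounded (0 : ℂ), hQne] with z hz hQz
  have hz' : z ^ n ≠ 0 := pow_ne_zero _ hz
  have hQz' : Q.eval z ≠ 0 := fun h0 => hQz (by simp [h0])
  field_simp

/-- If `R = N/D` with real coefficients, `D` has no zeros in the closed left
half-plane, `deg N < deg D`, and `|D(iy)|² - |N(iy)|² ≥ 0` for all real `y`,
then `R` is L-acceptable: `|R(z)| ≤ 1` on the closed left half-plane and
`R(z) → 0` as `Re z → -∞`. -/
theorem stmt_1 (N D : Polynomial ℝ)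
    (hD : ∀ z : ℂ, z.re ≤ 0 → Polynomial.aeval z D ≠ 0)
    (hdeg : N.degree < D.degree)
    (hE : ∀ y : ℝ,
      0 ≤ ‖Polynomial.aeval (Complex.I * y) D‖ ^ 2
          - ‖Polynomial.aeval (Complex.I * y) N‖ ^ 2) :
    (∀ z : ℂ, z.re ≤ 0 →
        ‖Polynomial.aeval z N / Polynomial.aeval z D‖ ≤ 1) ∧
      Tendsto (fun z : ℂ => Polynomial.aeval z N / Polynomial.aeval z D)
        (Filter.comap Complex.re Filter.atBot) (nhds 0) := by
  set Nc : Polynomial ℂ := N.map (algebraMap ℝ ℂ) with hNc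
  set Dc : Polynomial ℂ := D.map (algebraMap ℝ ℂ) with hDc
  have heval : ∀ (p : Polynomial ℝ) (z : ℂ),
      Polynomial.aeval z p = (p.map (algebraMap ℝ ℂ)).eval z := by
    intro p z
    rw [aeval_def, eval_map]
  have hinj : Function.Injective (algebraMap ℝ ℂ) := Complex.ofReal_injective
  have hDne : D ≠ 0 := by
    intro h
    exact hD 0 le_rfl (by simp [h])
  have hDcne : Dc ≠ 0 := by
    simpa [hDc, Polynomial.map_eq_zero_iff hinj] using hDne
  have hdegc : Nc.degree < Dc.degree := by
    rwa [hNc, hDc, degree_map_eq_of_injective hinj, degree_map_eq_of_injective hinj]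
  -- The quotient tends to zero at infinity
  have hcob : Tendsto (fun z : ℂ => Nc.eval z / Dc.eval z) (Bornology.cobounded ℂ) (𝓝 0) :=
    aux_div_tendsto_zero_cobounded hDcne hdegc
  have hfun : (fun z : ℂ => Polynomial.aeval z N / Polynomial.aeval z D)
      = fun z : ℂ => Nc.eval z / Dc.eval z := by
    funext z; rw [heval N z, heval D z]
  -- Part 2: tendsto along re → -∞
  have hle : Tendsto (fun z : ℂ => z) (Filter.comap Complex.re Filter.atBot)
      (Bornology.cobounded ℂ) := by
    rw [← tendsto_norm_atTop_iff_cobounded]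
    have h1 : Tendsto (fun z : ℂ => z.re) (Filter.comap Complex.re Filter.atBot) atBot :=
      tendsto_comap
    have h2 : Tendsto (fun z : ℂ => -z.re) (Filter.comap Complex.re Filter.atBot) atTop :=
      tendsto_neg_atBot_atTop.comp h1
    refine tendsto_atTop_mono (fun z => ?_) h2
    calc -z.re ≤ |z.re| := neg_le_abs _
    _ ≤ ‖z‖ := Complex.abs_re_le_norm z
  have part2 : Tendsto (fun z : ℂ => Polynomial.aeval z N / Polynomial.aeval z D)
      (Filter.comap Complex.re Filter.atBot) (nhds 0) := by
    rw [hfun]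
    exact hcob.comp hle
  -- Part 1: Phragmen-Lindelöf
  set f : ℂ → ℂ := fun w => Nc.eval (-w) / Dc.eval (-w) with hf
  have hDcnz : ∀ w : ℂ, 0 ≤ w.re → Dc.eval (-w) ≠ 0 := by
    intro w hw
    have := hD (-w) (by simpa using neg_nonpos_of_nonneg hw)
    rwa [heval D (-w)] at this
  have hd : DiffContOnCl ℂ f {z : ℂ | 0 < z.re} := by
    have hdiff : DifferentiableOn ℂ f {z : ℂ | 0 ≤ z.re} := by
      apply DifferentiableOn.div
      · exact (Nc.differentiable.comp differentiable_neg).differentiableOn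
      · exact (Dc.differentiable.comp differentiable_neg).differentiableOn
      · intro w hw; exact hDcnz w hw
    have hclos : closure {z : ℂ | 0 < z.re} = {z : ℂ | 0 ≤ z.re} :=
      Complex.closure_setOf_lt_re 0
    exact DifferentiableOn.diffContOnCl (by rwa [hclos])
  have hnegcob : Tendsto (fun w : ℂ => -w) (Bornology.cobounded ℂ) (Bornology.cobounded ℂ) := by
    rw [← tendsto_norm_atTop_iff_cobounded]
    simpa using tendsto_norm_cobounded_atTop
  have hfcob : Tendsto f (Bornology.cobounded ℂ) (𝓝 0) := hcob.comp hnegcob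
  have hexp : ∃ c < (2 : ℝ), ∃ B, f =O[Bornology.cobounded ℂ ⊓ Filter.principal {z : ℂ | 0 < z.re}]
      fun z => Real.exp (B * ‖z‖ ^ c) := by
    refine ⟨1, one_lt_two, 0, ?_⟩
    have : f =O[Bornology.cobounded ℂ ⊓ Filter.principal {z : ℂ | 0 < z.re}]
        (fun _ : ℂ => (1 : ℝ)) :=
      (hfcob.mono_left inf_le_left).isBigO_one ℝ
    simpa using this
  have hre : IsBoundedUnder (· ≤ ·) atTop fun x : ℝ => ‖f x‖ := by
    have hcoe : Tendsto (fun x : ℝ => (x : ℂ)) atTop (Bornology.cobounded ℂ) := by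
      rw [← tendsto_norm_atTop_iff_cobounded]
      simpa using tendsto_abs_atTop_atTop
    exact (hfcob.comp hcoe).norm.isBoundedUnder_le
  have him : ∀ x : ℝ, ‖f (x * Complex.I)‖ ≤ 1 := by
    intro x
    have hxI : -(↑x * Complex.I) = Complex.I * ((-x : ℝ) : ℂ) := by
      push_cast; ring
    have hE' := hE (-x)
    have hDpos : 0 < ‖Polynomial.aeval (Complex.I * ((-x : ℝ) : ℂ)) D‖ := by
      refine (norm_pos_iff).mpr (hD _ ?_)
      simp [Complex.mul_re]
    have habs : ‖Polynomial.aeval (Complex.I * ((-x : ℝ) : ℂ)) N‖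
        ≤ ‖Polynomial.aeval (Complex.I * ((-x : ℝ) : ℂ)) D‖ := by
      nlinarith [norm_nonneg (Polynomial.aeval (Complex.I * ((-x : ℝ) : ℂ)) N),
        norm_nonneg (Polynomial.aeval (Complex.I * ((-x : ℝ) : ℂ)) D)]
    have : ‖f (x * Complex.I)‖
        = ‖Polynomial.aeval (Complex.I * ((-x : ℝ) : ℂ)) N‖
          / ‖Polynomial.aeval (Complex.I * ((-x : ℝ) : ℂ)) D‖ := by
      rw [hf]
      simp only [norm_div]
      rw [hxI, heval N, heval D]
    rw [this]
    exact div_le_one_of_le₀ habs hDpos.le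
  have part1 : ∀ z : ℂ, z.re ≤ 0 →
      ‖Polynomial.aeval z N / Polynomial.aeval z D‖ ≤ 1 := by
    intro z hz
    have hzre : 0 ≤ (-z).re := by simpa using neg_nonneg_of_nonpos hz
    have := PhragmenLindelof.right_half_plane_of_bounded_on_real hd hexp hre him hzre
    have hfz : f (-z) = Polynomial.aeval z N / Polynomial.aeval z D := by
      rw [hf]; simp only [neg_neg]; rw [heval N z, heval D z]
    rwa [hfz] at this
  exact ⟨part1, part2⟩
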